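/- Let φ : ℝ³ → ℝ be differentiable, η : ℝ² → ℝ differentiable, q(x,t) = φ(x, η(x,t), t), and fix (x,t). Write φ_x, φ_z, φ_t for partial derivatives of φ at (x, η(x,t), t) and η_x, η_t, q_x, q_t for the partial derivatives of η and q at (x,t). If the kinematic condition η_t + η_x·φ_x = φ_z and the dynamic condition φ_t + (1/2)(φ_x² + φ_z²) + g·η(x,t) = 0 both hold at this point, then q_t + (1/2)q_x² + g·η − (1/2)(η_t + q_x η_x)²/(1 + η_x²) = 0. -/

import Mathlib

/-- The Bernoulli equation at the free surface expressed purely in terms of surface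
variables (the Zakharov/Craig–Sulem surface formulation). -/
theorem surface_bernoulli_equation
    (g : ℝ) (φ : ℝ × ℝ × ℝ → ℝ) (η : ℝ × ℝ → ℝ)
    (hφ : Differentiable ℝ φ) (hη : Differentiable ℝ η)
    (x t : ℝ)
    (q : ℝ × ℝ → ℝ) (hqdef : q = fun p => φ (p.1, η p, p.2))
    (φx φz φt ηx ηt qx qt : ℝ)
    (hφx : φx = fderiv ℝ φ (x, η (x, t), t) (1, 0, 0))
    (hφz : φz = fderiv ℝ φ (x, η (x, t), t) (0, 1, 0))
    (hφt : φt = fderiv ℝ φ (x, η (x, t), t) (0, 0, 1))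
    (hηx : ηx = fderiv ℝ η (x, t) (1, 0))
    (hηt : ηt = fderiv ℝ η (x, t) (0, 1))
    (hqx : qx = fderiv ℝ q (x, t) (1, 0))
    (hqt : qt = fderiv ℝ q (x, t) (0, 1))
    (hkin : ηt + ηx * φx = φz)
    (hdyn : φt + (1 / 2) * (φx ^ 2 + φz ^ 2) + g * η (x, t) = 0) :
    qt + (1 / 2) * qx ^ 2 + g * η (x, t)
      - (1 / 2) * (ηt + qx * ηx) ^ 2 / (1 + ηx ^ 2) = 0 := by
  set L : (ℝ × ℝ) →L[ℝ] (ℝ × ℝ × ℝ) :=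
    (ContinuousLinearMap.fst ℝ ℝ ℝ).prod
      ((fderiv ℝ η (x, t)).prod (ContinuousLinearMap.snd ℝ ℝ ℝ)) with hL
  have hf : HasFDerivAt (fun p : ℝ × ℝ => ((p.1, η p, p.2) : ℝ × ℝ × ℝ)) L (x, t) :=
    HasFDerivAt.prodMk hasFDerivAt_fst (((hη (x, t)).hasFDerivAt).prodMk hasFDerivAt_snd)
  have hq : HasFDerivAt q ((fderiv ℝ φ (x, η (x, t), t)).comp L) (x, t) := by
    rw [hqdef]
    exact (hφ (x, η (x, t), t)).hasFDerivAt.comp (x, t) hf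
  have hD : fderiv ℝ q (x, t) = (fderiv ℝ φ (x, η (x, t), t)).comp L := hq.fderiv
  have e1 : ((1 : ℝ), ηx, (0 : ℝ)) = ((1, 0, 0) : ℝ × ℝ × ℝ) + ηx • ((0, 1, 0) : ℝ × ℝ × ℝ) := by
    simp
  have e2 : ((0 : ℝ), ηt, (1 : ℝ)) = ((0, 0, 1) : ℝ × ℝ × ℝ) + ηt • ((0, 1, 0) : ℝ × ℝ × ℝ) := by
    simp
  have hqx' : qx = φx + ηx * φz := by
    rw [hqx, hD]
    simp only [ContinuousLinearMap.comp_apply, hL, ContinuousLinearMap.prod_apply,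
      ContinuousLinearMap.coe_fst', ContinuousLinearMap.coe_snd', ← hηx]
    rw [e1, map_add, map_smul, smul_eq_mul]
    rw [hφx, hφz]
  have hqt' : qt = φt + ηt * φz := by
    rw [hqt, hD]
    simp only [ContinuousLinearMap.comp_apply, hL, ContinuousLinearMap.prod_apply,
      ContinuousLinearMap.coe_fst', ContinuousLinearMap.coe_snd', ← hηt]
    rw [e2, map_add, map_smul, smul_eq_mul]
    rw [hφt, hφz]
  have hden : (1 : ℝ) + ηx ^ 2 ≠ 0 := by positivity
  have hnum : ηt + qx * ηx = φz * (1 + ηx ^ 2) := by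
    rw [hqx', ← hkin]; ring
  have key : (φz * (1 + ηx ^ 2)) ^ 2 / (1 + ηx ^ 2) = φz ^ 2 * (1 + ηx ^ 2) := by
    field_simp
  rw [hnum, hqx', hqt', mul_div_assoc, key]
  linear_combination hdyn + φz * hkin
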